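/- There exists a group homomorphism ψ from the Klein bottle group ⟨u, v | uvuv⁻¹ = 1⟩ to the braid group B_{4k}(ℝ²) whose composite with the permutation homomorphism B_{4k} → ℤ/(4k) (induced by sending σ_i to transpositions and reducing via the cyclic quotient on the subgroup of ℤ/(4k)-permutation braids) sends u to 2k and v to 1; equivalently, there exist α, β ∈ B_{4k}(ℝ²) with permutation equal to c^{2k} and c respectively (c the 4k-cycle (1,4k,…,2)) such that αβαβ⁻¹ = 1 in B_{4k}(ℝ²). -/

import Mathlib

/-- Defining relators for the Artin braid group `B_n` on generators `σ_1, …, σ_{n-1}`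
(generators indexed by `ℕ`; the irrelevant generators `σ_0` and `σ_i` for `i ≥ n` are killed). -/
def braidRels (n : ℕ) : Set (FreeGroup ℕ) :=
  { r | (∃ i : ℕ, (i = 0 ∨ n ≤ i) ∧ r = FreeGroup.of i) ∨
        (∃ i j : ℕ, 1 ≤ i ∧ i + 2 ≤ j ∧ j ≤ n - 1 ∧
          r = FreeGroup.of i * FreeGroup.of j * (FreeGroup.of i)⁻¹ * (FreeGroup.of j)⁻¹) ∨
        (∃ i : ℕ, 1 ≤ i ∧ i + 2 ≤ n ∧
          r = FreeGroup.of i * FreeGroup.of (i + 1) * FreeGroup.of i *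
              (FreeGroup.of (i + 1) * FreeGroup.of i * FreeGroup.of (i + 1))⁻¹) }

/-- The Artin braid group `B_n = B_n(ℝ²)`, as the group presented by the generators
`σ_1, …, σ_{n-1}` subject to the braid relations. -/
abbrev BraidGroup (n : ℕ) : Type := PresentedGroup (braidRels n)

/-- The Artin generator `σ_i` of `B_n`. -/
def braidσ (n i : ℕ) : BraidGroup n := PresentedGroup.of i

/-- The braid `g = σ₁ σ₂ ⋯ σ_{n-1} ∈ B_n`. -/
def braidg (n : ℕ) : BraidGroup n := ((List.range' 1 (n - 1)).map (braidσ n)).prod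

/-- The pure braid generator `A_{i,j} = σ_{j-1}⋯σ_{i+1} σ_i² σ_{i+1}⁻¹⋯σ_{j-1}⁻¹ ∈ B_n`. -/
def braidA (n i j : ℕ) : BraidGroup n :=
  (((List.range' (i + 1) (j - 1 - i)).map (braidσ n)).reverse.prod) * (braidσ n i) ^ 2 *
    (((List.range' (i + 1) (j - 1 - i)).map (braidσ n)).reverse.prod)⁻¹

namespace St15
variable {n : ℕ}

lemma rel_eq_one {r : FreeGroup ℕ} (h : r ∈ braidRels n) :
    PresentedGroup.mk (braidRels n) r = 1 := by
  have : r ∈ Subgroup.normalClosure (braidRels n) := Subgroup.subset_normalClosure h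
  exact (QuotientGroup.eq_one_iff r).mpr this

open scoped commutatorElement in
lemma sigma_comm {i j : ℕ} (h1 : 1 ≤ i) (h2 : i + 2 ≤ j) (h3 : j ≤ n - 1) :
    braidσ n i * braidσ n j = braidσ n j * braidσ n i := by
  have h := rel_eq_one (n := n) (r := FreeGroup.of i * FreeGroup.of j *
      (FreeGroup.of i)⁻¹ * (FreeGroup.of j)⁻¹)
    (Or.inr (Or.inl ⟨i, j, h1, h2, h3, rfl⟩))
  have h' : ⁅braidσ n i, braidσ n j⁆ = 1 := by
    simpa [braidσ, PresentedGroup.of, commutatorElement_def, map_mul, map_inv] using h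
  exact commutatorElement_eq_one_iff_mul_comm.mp h'

lemma sigma_braid {i : ℕ} (h1 : 1 ≤ i) (h2 : i + 2 ≤ n) :
    braidσ n i * braidσ n (i+1) * braidσ n i = braidσ n (i+1) * braidσ n i * braidσ n (i+1) := by
  have h := rel_eq_one (n := n) (r := FreeGroup.of i * FreeGroup.of (i + 1) * FreeGroup.of i *
              (FreeGroup.of (i + 1) * FreeGroup.of i * FreeGroup.of (i + 1))⁻¹)
    (Or.inr (Or.inr ⟨i, h1, h2, rfl⟩))
  have h' : braidσ n i * braidσ n (i+1) * braidσ n i *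
      (braidσ n (i+1) * braidσ n i * braidσ n (i+1))⁻¹ = 1 := by
    simpa [braidσ, PresentedGroup.of, map_mul, map_inv] using h
  exact mul_inv_eq_one.mp h'


/-- `Ap n m = σ₁ σ₂ ⋯ σ_m`. -/
def Ap (n : ℕ) : ℕ → BraidGroup n
  | 0 => 1
  | m+1 => Ap n m * braidσ n (m+1)

def braidg (n : ℕ) : BraidGroup n := ((List.range' 1 (n - 1)).map (braidσ n)).prod

lemma braidg_eq_Ap : braidg n = Ap n (n-1) := by
  suffices h : ∀ m, ((List.range' 1 m).map (braidσ n)).prod = Ap n m by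
    exact h (n-1)
  intro m
  induction m with
  | zero => simp [Ap]
  | succ m ih =>
      rw [List.range'_concat, List.map_append, List.prod_append, ih]
      simp only [List.map_cons, List.map_nil, List.prod_cons, List.prod_nil, mul_one, Ap]
      have : 1 + 1 * m = m + 1 := by omega
      rw [this]

/-- σ_j commutes with A_m when m + 2 ≤ j ≤ n-1. -/
lemma sigma_comm_Ap {j m : ℕ} (h2 : m + 2 ≤ j) (h3 : j ≤ n - 1) :
    braidσ n j * Ap n m = Ap n m * braidσ n j := by
  induction m with
  | zero => simp [Ap]
  | succ m ih =>
      have hc := sigma_comm (n := n) (i := m+1) (j := j) (Nat.le_add_left 1 m)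
        (by omega) h3
      rw [Ap, ← mul_assoc, ih (by omega), mul_assoc, ← hc, ← mul_assoc]

/-- Key lemma: A_{m+1} A_m σ_{m+1} = σ₁ A_{m+1} A_m. -/
lemma keyW : ∀ m : ℕ, m + 1 ≤ n - 1 →
    Ap n (m+1) * Ap n m * braidσ n (m+1) = braidσ n 1 * (Ap n (m+1) * Ap n m)
  | 0, h => by
      simp only [Ap, one_mul, mul_one]
  | (m+1), h => by
      have ih := keyW m (by omega)
      have hcomm : braidσ n (m+2) * Ap n m = Ap n m * braidσ n (m+2) :=
        sigma_comm_Ap (by omega) h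
      have hbraid : braidσ n (m+1) * braidσ n (m+2) * braidσ n (m+1)
          = braidσ n (m+2) * braidσ n (m+1) * braidσ n (m+2) :=
        sigma_braid (Nat.le_add_left 1 m) (by omega)
      calc Ap n (m+2) * Ap n (m+1) * braidσ n (m+2)
          = Ap n (m+1) * (braidσ n (m+2) * Ap n m) * (braidσ n (m+1) * braidσ n (m+2)) := by
            simp only [Ap]; group
        _ = Ap n (m+1) * Ap n m * (braidσ n (m+2) * braidσ n (m+1) * braidσ n (m+2)) := by
            rw [hcomm]; group
        _ = Ap n (m+1) * Ap n m * (braidσ n (m+1) * braidσ n (m+2) * braidσ n (m+1)) := by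
            rw [← hbraid]
        _ = (Ap n (m+1) * Ap n m * braidσ n (m+1)) * (braidσ n (m+2) * braidσ n (m+1)) := by
            group
        _ = braidσ n 1 * (Ap n (m+1) * Ap n m) * (braidσ n (m+2) * braidσ n (m+1)) := by
            rw [ih]
        _ = braidσ n 1 * Ap n (m+1) * (braidσ n (m+2) * Ap n m) * braidσ n (m+1) := by
            rw [hcomm]; group
        _ = braidσ n 1 * (Ap n (m+2) * Ap n (m+1)) := by
            simp only [Ap]; group

/-- Shift: A_m σ_i = σ_{i+1} A_m for i+1 ≤ m ≤ n-1, 1 ≤ i ≤ n-2. -/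
lemma shift_Ap {i : ℕ} (h1 : 1 ≤ i) (h2 : i ≤ n - 2) :
    ∀ m, i + 1 ≤ m → m ≤ n - 1 → Ap n m * braidσ n i = braidσ n (i+1) * Ap n m := by
  intro m
  induction m with
  | zero => omega
  | succ m ih =>
      intro hm1 hm2
      rcases Nat.lt_or_ge m (i+1) with hlt | hge
      · -- m + 1 = i + 1, base case: m = i
        obtain ⟨i', rfl⟩ : ∃ i', i = i' + 1 := ⟨i - 1, by omega⟩
        have hmi : m = i' + 1 := by omega
        subst hmi
        have hbraid : braidσ n (i'+1) * braidσ n (i'+2) * braidσ n (i'+1)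
            = braidσ n (i'+2) * braidσ n (i'+1) * braidσ n (i'+2) :=
          sigma_braid (Nat.le_add_left 1 i') (by omega)
        have hcomm : braidσ n (i'+2) * Ap n i' = Ap n i' * braidσ n (i'+2) :=
          sigma_comm_Ap (by omega) (by omega)
        calc Ap n (i'+2) * braidσ n (i'+1)
            = Ap n i' * (braidσ n (i'+1) * braidσ n (i'+2) * braidσ n (i'+1)) := by
              simp only [Ap]; group
          _ = Ap n i' * (braidσ n (i'+2) * braidσ n (i'+1) * braidσ n (i'+2)) := by rw [hbraid]
          _ = (Ap n i' * braidσ n (i'+2)) * (braidσ n (i'+1) * braidσ n (i'+2)) := by group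
          _ = braidσ n (i'+2) * Ap n (i'+2) := by rw [← hcomm]; simp only [Ap]; group
      · have hcomm : braidσ n i * braidσ n (m+1) = braidσ n (m+1) * braidσ n i := by
          have := sigma_comm (n := n) (i := i) (j := m+1) h1 (by omega) (by omega)
          exact this
        calc Ap n (m+1) * braidσ n i = Ap n m * (braidσ n (m+1) * braidσ n i) := by
              simp only [Ap]; group
          _ = Ap n m * braidσ n i * braidσ n (m+1) := by rw [← hcomm]; group
          _ = braidσ n (i+1) * Ap n (m+1) := by rw [ih hge (by omega)]; simp only [Ap]; group


/-- Wrap-around: δ² σ_{n-1} = σ₁ δ², where δ = A_{n-1}. -/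
lemma wrap (hn : 2 ≤ n) :
    (Ap n (n-1) * Ap n (n-1)) * braidσ n (n-1) =
      braidσ n 1 * (Ap n (n-1) * Ap n (n-1)) := by
  obtain ⟨m, hm⟩ : ∃ m, n - 1 = m + 1 := ⟨n - 2, by omega⟩
  rw [hm]
  have hW := keyW (n := n) m (by omega)
  have hsplit : Ap n (m+1) = Ap n m * braidσ n (m+1) := rfl
  calc Ap n (m+1) * Ap n (m+1) * braidσ n (m+1)
      = (Ap n (m+1) * Ap n m * braidσ n (m+1)) * braidσ n (m+1) := by
        rw [hsplit]; group
    _ = braidσ n 1 * (Ap n (m+1) * Ap n m) * braidσ n (m+1) := by rw [hW]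
    _ = braidσ n 1 * (Ap n (m+1) * Ap n (m+1)) := by rw [hsplit]; group

/-- δ² σ_i = σ_{i+2} δ² for 1 ≤ i ≤ n-3. -/
lemma shift2 {i : ℕ} (h1 : 1 ≤ i) (h2 : i + 3 ≤ n) :
    (Ap n (n-1) * Ap n (n-1)) * braidσ n i = braidσ n (i+2) * (Ap n (n-1) * Ap n (n-1)) := by
  have s1 := shift_Ap (n := n) h1 (by omega) (n-1) (by omega) le_rfl
  have s2 := shift_Ap (n := n) (i := i+1) (by omega) (by omega) (n-1) (by omega) le_rfl
  calc Ap n (n-1) * Ap n (n-1) * braidσ n i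
      = Ap n (n-1) * (Ap n (n-1) * braidσ n i) := by group
    _ = Ap n (n-1) * braidσ n (i+1) * Ap n (n-1) := by rw [s1]; group
    _ = braidσ n (i+1+1) * Ap n (n-1) * Ap n (n-1) := by rw [s2]
    _ = braidσ n (i+2) * (Ap n (n-1) * Ap n (n-1)) := by group

/-- `Tp n j = σ₁ σ₃ ⋯ σ_{2j-1}`. -/
def Tp (n : ℕ) : ℕ → BraidGroup n
  | 0 => 1
  | j+1 => Tp n j * braidσ n (2*j+1)

/-- `Up n j = σ₃ σ₅ ⋯ σ_{2j+1}`. -/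
def Up (n : ℕ) : ℕ → BraidGroup n
  | 0 => 1
  | j+1 => Up n j * braidσ n (2*j+3)

lemma sigma1_Up : ∀ j, 2*j+1 ≤ n - 1 → braidσ n 1 * Up n j = Tp n (j+1)
  | 0, _ => by simp [Up, Tp]
  | (j+1), h => by
      rw [Up, ← mul_assoc, sigma1_Up j (by omega)]
      have h2 : Tp n (j+1+1) = Tp n (j+1) * braidσ n (2*(j+1)+1) := rfl
      have h3 : 2*(j+1)+1 = 2*j+3 := by omega
      rw [h2, h3]

lemma Up_sigma1 : ∀ j, 2*j+1 ≤ n - 1 → Up n j * braidσ n 1 = braidσ n 1 * Up n j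
  | 0, _ => by simp [Up]
  | (j+1), h => by
      have hc : braidσ n 1 * braidσ n (2*j+3) = braidσ n (2*j+3) * braidσ n 1 :=
        sigma_comm le_rfl (by omega) (by omega)
      rw [Up, mul_assoc, ← hc, ← mul_assoc, Up_sigma1 j (by omega), mul_assoc]

/-- δ² (σ₁σ₃⋯σ_{2j-1}) = (σ₃σ₅⋯σ_{2j+1}) δ², valid while 2j+2 ≤ n. -/
lemma shift_Tp : ∀ j, 2*j + 2 ≤ n →
    (Ap n (n-1) * Ap n (n-1)) * Tp n j = Up n j * (Ap n (n-1) * Ap n (n-1))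
  | 0, _ => by simp [Tp, Up]
  | (j+1), h => by
      have hs := shift2 (n := n) (i := 2*j+1) (by omega) (by omega)
      calc Ap n (n-1) * Ap n (n-1) * Tp n (j+1)
          = (Ap n (n-1) * Ap n (n-1) * Tp n j) * braidσ n (2*j+1) := by rw [Tp]; group
        _ = Up n j * (Ap n (n-1) * Ap n (n-1) * braidσ n (2*j+1)) := by
            rw [shift_Tp j (by omega)]; group
        _ = Up n j * (braidσ n (2*j+1+2) * (Ap n (n-1) * Ap n (n-1))) := by rw [hs]
        _ = Up n (j+1) * (Ap n (n-1) * Ap n (n-1)) := by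
            rw [Up]
            have : 2*j+1+2 = 2*j+3 := by omega
            rw [this]; group

/-- Main commutation: δ² commutes with T = σ₁σ₃⋯σ_{n-1}, for n = 4k, k ≥ 1. -/
lemma main_comm {k : ℕ} (hk : 1 ≤ k) (hn : n = 4*k) :
    (Ap n (n-1) * Ap n (n-1)) * Tp n (2*k) = Tp n (2*k) * (Ap n (n-1) * Ap n (n-1)) := by
  obtain ⟨j, hj⟩ : ∃ j, 2*k = j + 1 := ⟨2*k - 1, by omega⟩
  rw [hj]
  have h1 : 2*j+1 = n-1 := by omega
  calc Ap n (n-1) * Ap n (n-1) * Tp n (j+1)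
      = (Ap n (n-1) * Ap n (n-1) * Tp n j) * braidσ n (2*j+1) := by rw [Tp]; group
    _ = Up n j * ((Ap n (n-1) * Ap n (n-1)) * braidσ n (n-1)) := by
        rw [shift_Tp j (by omega), h1]; group
    _ = Up n j * (braidσ n 1 * (Ap n (n-1) * Ap n (n-1))) := by rw [wrap (by omega)]
    _ = (Up n j * braidσ n 1) * (Ap n (n-1) * Ap n (n-1)) := by group
    _ = (braidσ n 1 * Up n j) * (Ap n (n-1) * Ap n (n-1)) := by
        rw [Up_sigma1 j (by omega)]
    _ = Tp n (j+1) * (Ap n (n-1) * Ap n (n-1)) := by rw [sigma1_Up j (by omega)]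


section Perm
variable (π : BraidGroup n →* Equiv.Perm ℕ)
variable (hπ : ∀ i : ℕ, 1 ≤ i → i ≤ n - 1 → π (braidσ n i) = Equiv.swap i (i + 1))

include hπ

lemma perm_Ap : ∀ m, m ≤ n - 1 → ∀ x : ℕ,
    π (Ap n m) x = if x = m + 1 then 1 else if 1 ≤ x ∧ x ≤ m then x + 1 else x := by
  intro m
  induction m with
  | zero =>
      intro _ x
      simp only [Ap, map_one, Equiv.Perm.one_apply]
      split_ifs with h1 h2
      · omega
      · omega
      · rfl
  | succ m ih =>
      intro hm x
      have hswap : π (braidσ n (m+1)) = Equiv.swap (m+1) (m+2) :=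
        hπ (m+1) (Nat.le_add_left 1 m) (by omega)
      have hmul : π (Ap n (m+1)) x = π (Ap n m) (Equiv.swap (m+1) (m+2) x) := by
        rw [show Ap n (m+1) = Ap n m * braidσ n (m+1) from rfl, map_mul,
          Equiv.Perm.mul_apply, hswap]
      rw [hmul]
      rcases eq_or_ne x (m+1) with rfl | hx1
      · rw [Equiv.swap_apply_left, ih (by omega) (m+2)]
        split_ifs <;> first | omega | exact False.elim (by assumption)
      rcases eq_or_ne x (m+2) with rfl | hx2
      · rw [Equiv.swap_apply_right, ih (by omega) (m+1)]
        split_ifs <;> first | omega | exact False.elim (by assumption)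
      · rw [Equiv.swap_apply_of_ne_of_ne hx1 hx2, ih (by omega) x]
        split_ifs <;> first | omega | exact False.elim (by assumption)

lemma perm_Tp : ∀ j, 2*j ≤ n → ∀ x : ℕ,
    π (Tp n j) x = if 1 ≤ x ∧ x ≤ 2*j then (if x % 2 = 1 then x + 1 else x - 1) else x := by
  intro j
  induction j with
  | zero =>
      intro _ x
      simp only [Tp, map_one, Equiv.Perm.one_apply]
      split_ifs with h1 <;> omega
  | succ j ih =>
      intro hj x
      have hswap : π (braidσ n (2*j+1)) = Equiv.swap (2*j+1) (2*j+2) :=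
        hπ (2*j+1) (by omega) (by omega)
      have hmul : π (Tp n (j+1)) x = π (Tp n j) (Equiv.swap (2*j+1) (2*j+2) x) := by
        rw [show Tp n (j+1) = Tp n j * braidσ n (2*j+1) from rfl, map_mul,
          Equiv.Perm.mul_apply, hswap]
      rw [hmul]
      rcases eq_or_ne x (2*j+1) with rfl | hx1
      · rw [Equiv.swap_apply_left, ih (by omega) (2*j+2)]
        have h2 : (2*j+1) % 2 = 1 := by omega
        split_ifs <;> first | omega | exact False.elim (by assumption)
      rcases eq_or_ne x (2*j+2) with rfl | hx2
      · rw [Equiv.swap_apply_right, ih (by omega) (2*j+1)]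
        have h2 : (2*j+2) % 2 = 0 := by omega
        split_ifs <;> first | omega | exact False.elim (by assumption)
      · rw [Equiv.swap_apply_of_ne_of_ne hx1 hx2, ih (by omega) x]
        split_ifs <;> first | omega | exact False.elim (by assumption)

lemma perm_Tp_inv (j : ℕ) (hj : 2*j ≤ n) : (π (Tp n j))⁻¹ = π (Tp n j) := by
  have hsq : π (Tp n j) * π (Tp n j) = 1 := by
    ext x
    rw [Equiv.Perm.mul_apply, perm_Tp π hπ j hj, perm_Tp π hπ j hj, Equiv.Perm.one_apply]
    rcases Nat.lt_or_ge x 1 with h0 | h1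
    · split_ifs <;> first | omega | exact False.elim (by assumption)
    rcases Nat.lt_or_ge (2*j) x with h2 | h2
    · split_ifs <;> first | omega | exact False.elim (by assumption)
    · rcases Nat.even_or_odd x with he | ho
      · have hx2 : x % 2 = 0 := Nat.even_iff.mp he
        have hx1 : 1 ≤ x - 1 ∧ x - 1 ≤ 2*j ∧ (x-1) % 2 = 1 := by omega
        split_ifs <;> first | omega | exact False.elim (by assumption)
      · have hx2 : x % 2 = 1 := Nat.odd_iff.mp ho
        have hx1 : x + 1 ≤ 2*j ∧ (x+1) % 2 = 0 := by omega
        split_ifs <;> first | omega | exact False.elim (by assumption)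
  exact inv_eq_of_mul_eq_one_left hsq

end Perm


section Perm2
variable {k : ℕ}
variable (π : BraidGroup n →* Equiv.Perm ℕ)
variable (hπ : ∀ i : ℕ, 1 ≤ i → i ≤ n - 1 → π (braidσ n i) = Equiv.swap i (i + 1))
variable (hk : 1 ≤ k) (hn : n = 4 * k)

include hπ hk hn

lemma perm_v : ∀ x : ℕ, π (Ap n (n-1) * (Tp n (2*k))⁻¹) x =
    if x % 2 = 1 ∧ x ≤ n - 1 then (if x = n-1 then 1 else x + 2) else x := by
  intro x
  rw [map_mul, map_inv, Equiv.Perm.mul_apply, perm_Tp_inv π hπ (2*k) (by omega),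
    perm_Tp π hπ (2*k) (by omega) x, perm_Ap π hπ (n-1) le_rfl]
  split_ifs <;> first | omega | exact False.elim (by assumption)

lemma perm_vpow : ∀ m, m ≤ k → ∀ x : ℕ,
    π ((Ap n (n-1) * (Tp n (2*k))⁻¹)^m) x =
      if x % 2 = 1 ∧ x ≤ n - 1 then
        (if x + 2*m ≤ n-1 then x + 2*m else x + 2*m - n) else x := by
  intro m
  induction m with
  | zero =>
      intro _ x
      rw [pow_zero, map_one, Equiv.Perm.one_apply]
      split_ifs <;> first | omega | exact False.elim (by assumption)
  | succ m ih =>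
      intro hm x
      rw [pow_succ, map_mul, Equiv.Perm.mul_apply, perm_v π hπ hk hn x,
        ih (by omega) _]
      split_ifs <;> first | omega | exact False.elim (by assumption)

end Perm2

section CPow
variable {k : ℕ}
variable (c : Equiv.Perm ℕ)
variable (hc1 : c 1 = 4 * k)
variable (hc2 : ∀ i : ℕ, 2 ≤ i → i ≤ 4 * k → c i = i - 1)
variable (hc3 : ∀ i : ℕ, i = 0 ∨ 4 * k < i → c i = i)

include hc1 hc2 hc3

lemma c_eval : ∀ y : ℕ, c y = if y = 1 then 4*k else if y ≤ 4*k then y - 1 else y := by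
  intro y
  rcases Nat.eq_zero_or_pos y with rfl | hy
  · rw [hc3 0 (Or.inl rfl)]
    split_ifs <;> first | omega | exact False.elim (by assumption)
  rcases eq_or_ne y 1 with rfl | hy1
  · rw [hc1, if_pos rfl]
  rcases Nat.lt_or_ge (4*k) y with hgt | hle
  · rw [hc3 y (Or.inr hgt)]
    split_ifs <;> first | omega | exact False.elim (by assumption)
  · rw [hc2 y (by omega) hle]
    split_ifs <;> first | omega | exact False.elim (by assumption)

lemma c_pow_eval : ∀ m, m ≤ 4*k → ∀ x : ℕ,
    (c ^ m) x = if 1 ≤ x ∧ x ≤ 4*k then (if m < x then x - m else x + 4*k - m) else x := by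
  intro m
  induction m with
  | zero =>
      intro _ x
      rw [pow_zero, Equiv.Perm.one_apply]
      split_ifs <;> first | omega | exact False.elim (by assumption)
  | succ m ih =>
      intro hm x
      rw [pow_succ', Equiv.Perm.mul_apply, ih (by omega) x, c_eval c hc1 hc2 hc3]
      split_ifs <;> first | omega | exact False.elim (by assumption)

end CPow


end St15

/-- there exist `α, β ∈ B_{4k}(ℝ²)` whose permutations are `c^{2k}` and `c`
respectively, where `c` is the `4k`-cycle `(1, 4k, 4k-1, …, 2)` (the permutation sending
`1 ↦ 4k` and `i ↦ i-1` for `2 ≤ i ≤ 4k`, fixing everything else), such that `αβαβ⁻¹ = 1`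
in `B_{4k}(ℝ²)`.  Equivalently, there is a homomorphism from the Klein bottle group
`⟨u,v | uvuv⁻¹⟩` to `B_{4k}(ℝ²)` lifting `u ↦ 2k`, `v ↦ 1` through the permutation map. -/
theorem statement15 (k : ℕ) (hk : 1 ≤ k) (π : BraidGroup (4 * k) →* Equiv.Perm ℕ)
    (hπ : ∀ i : ℕ, 1 ≤ i → i ≤ 4 * k - 1 →
      π (braidσ (4 * k) i) = Equiv.swap i (i + 1))
    (c : Equiv.Perm ℕ) (hc1 : c 1 = 4 * k)
    (hc2 : ∀ i : ℕ, 2 ≤ i → i ≤ 4 * k → c i = i - 1)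
    (hc3 : ∀ i : ℕ, i = 0 ∨ 4 * k < i → c i = i) :
    ∃ α β : BraidGroup (4 * k),
      π α = c ^ (2 * k) ∧ π β = c ∧ α * β * α * β⁻¹ = 1 := by
  classical
  set δ : BraidGroup (4*k) := St15.Ap (4*k) (4*k - 1) with hδdef
  set T : BraidGroup (4*k) := St15.Tp (4*k) (2*k) with hTdef
  set t : BraidGroup (4*k) := (δ * T⁻¹) ^ k with htdef
  refine ⟨t⁻¹ * δ⁻¹ * t * δ, δ⁻¹, ?_, ?_, ?_⟩
  · -- π α = c ^ (2k)
    have hceval := St15.c_eval c hc1 hc2 hc3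
    have hδeval := St15.perm_Ap π hπ (4*k - 1) le_rfl
    have hcmul : c * π δ = 1 := by
      ext x
      rw [Equiv.Perm.mul_apply, Equiv.Perm.one_apply, hδeval x, hceval]
      split_ifs <;> first | omega | exact False.elim (by assumption)
    have hπδ : π δ = c⁻¹ := eq_inv_of_mul_eq_one_right hcmul
    have hvk := St15.perm_vpow π hπ hk rfl k le_rfl
    have hc2k1 := St15.c_pow_eval c hc1 hc2 hc3 (2*k+1) (by omega)
    have hcs : c * π t = π t * c ^ (2*k+1) := by
      ext x
      rw [Equiv.Perm.mul_apply, Equiv.Perm.mul_apply, htdef, hvk x, hc2k1 x, hvk _, hceval]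
      split_ifs <;> first | omega | exact False.elim (by assumption)
    have hexp : π (t⁻¹ * δ⁻¹ * t * δ) = (π t)⁻¹ * c * π t * c⁻¹ := by
      rw [map_mul, map_mul, map_mul, map_inv, map_inv, hπδ, inv_inv]
    rw [hexp]
    calc (π t)⁻¹ * c * π t * c⁻¹
        = (π t)⁻¹ * (c * π t) * c⁻¹ := by rw [mul_assoc ((π t)⁻¹) c (π t)]
      _ = (π t)⁻¹ * (π t * c ^ (2*k+1)) * c⁻¹ := by rw [hcs]
      _ = c ^ (2*k+1) * c⁻¹ := by rw [inv_mul_cancel_left]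
      _ = c ^ (2*k) := by rw [pow_succ, mul_inv_cancel_right]
  · -- π β = c
    have hceval := St15.c_eval c hc1 hc2 hc3
    have hδeval := St15.perm_Ap π hπ (4*k - 1) le_rfl
    have hcmul : c * π δ = 1 := by
      ext x
      rw [Equiv.Perm.mul_apply, Equiv.Perm.one_apply, hδeval x, hceval]
      split_ifs <;> first | omega | exact False.elim (by assumption)
    have hπδ : π δ = c⁻¹ := eq_inv_of_mul_eq_one_right hcmul
    rw [map_inv, hπδ, inv_inv]
  · -- the Klein bottle relation
    have hcT : Commute (δ * δ) T := St15.main_comm hk rfl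
    have hcδ : Commute (δ * δ) δ := (Commute.refl δ).mul_left (Commute.refl δ)
    have hcv : Commute (δ * δ) (δ * T⁻¹) := hcδ.mul_right hcT.inv_right
    have hct : Commute (δ * δ) t := by rw [htdef]; exact hcv.pow_right k
    calc t⁻¹ * δ⁻¹ * t * δ * δ⁻¹ * (t⁻¹ * δ⁻¹ * t * δ) * δ⁻¹⁻¹
        = t⁻¹ * ((δ * δ)⁻¹ * t) * (δ * δ) := by group
      _ = t⁻¹ * (t * (δ * δ)⁻¹) * (δ * δ) := by rw [hct.inv_left.eq]
      _ = 1 := by group
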